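/- Let 1 ≤ r ≤ n be integers and (s₁, …, s_r) an r-tuple of positive integers. If there exists a prime p with n/(r+1) < p ≤ n/r and r < p, then H_n(s₁, …, s_r) is not an integer. -/

import Mathlib

/-- The multiple harmonic sum
`H_n(s₁, …, s_r) = ∑_{1 ≤ k₁ < ⋯ < k_r ≤ n} 1/(k₁^{s₁} ⋯ k_r^{s_r})`. -/
def mhs (n r : ℕ) (s : Fin r → ℕ) : ℚ :=
  ∑ k ∈ Finset.univ.filter (fun k : Fin r → Fin n => ∀ i j : Fin r, i < j → k i < k j),
    ∏ i, (1 : ℚ) / ((k i : ℕ) + 1 : ℚ) ^ s i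

private lemma padicNorm_pow' (p : ℕ) [Fact p.Prime] (q : ℚ) (k : ℕ) :
    padicNorm p (q ^ k) = padicNorm p q ^ k := by
  induction k with
  | zero => simp [padicNorm.one]
  | succ k ih => rw [pow_succ, padicNorm.mul, ih, pow_succ]

private lemma padicNorm_prod' {ι : Type*} (p : ℕ) [Fact p.Prime] (t : Finset ι) (g : ι → ℚ) :
    padicNorm p (∏ i ∈ t, g i) = ∏ i ∈ t, padicNorm p (g i) := by
  classical
  induction t using Finset.induction with
  | empty => simp [padicNorm.one]
  | insert _ _ h ih => rw [Finset.prod_insert h, Finset.prod_insert h, padicNorm.mul, ih]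

private lemma padicNorm_factor (p : ℕ) [hp : Fact p.Prime] (a t : ℕ) (ha : 0 < a)
    (ha2 : ¬ p ^ 2 ∣ a) :
    padicNorm p ((1 : ℚ) / (a : ℚ) ^ t) = if p ∣ a then (p : ℚ) ^ t else 1 := by
  rw [padicNorm.div, padicNorm.one, padicNorm_pow']
  by_cases hd : p ∣ a
  · obtain ⟨b, hb⟩ := hd
    have hb0 : b ≠ 0 := by rintro rfl; simp at hb; omega
    have hpb : ¬ p ∣ b := by
      rintro ⟨c, rfl⟩
      exact ha2 ⟨c, by rw [hb]; ring⟩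
    have : (a : ℚ) = (p : ℚ) * (b : ℚ) := by exact_mod_cast congrArg Nat.cast hb
    rw [this, padicNorm.mul, padicNorm.padicNorm_p_of_prime,
      (padicNorm.nat_eq_one_iff b).2 hpb, mul_one]
    have hp0 : (p : ℚ) ≠ 0 := by exact_mod_cast (Fact.out (p := p.Prime)).ne_zero
    rw [if_pos ⟨b, hb⟩]
    field_simp
    rw [one_div_pow, one_div_mul_cancel (pow_ne_zero _ hp0)]
  · rw [(padicNorm.nat_eq_one_iff a).2 hd, if_neg hd, one_pow, div_one]

private lemma strictmono_eq (r : ℕ) (m : Fin r → ℕ)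
    (hmono : ∀ i j : Fin r, i < j → m i < m j)
    (hlow : ∀ i, 1 ≤ m i) (hhigh : ∀ i, m i ≤ r) :
    ∀ i : Fin r, m i = i.val + 1 := by
  have lower : ∀ (m : Fin r → ℕ), (∀ i j : Fin r, i < j → m i < m j) →
      (∀ i, 1 ≤ m i) → ∀ (j : ℕ) (h : j < r), j + 1 ≤ m ⟨j, h⟩ := by
    intro m hmono h1 j
    induction j with
    | zero => intro h; exact h1 _
    | succ j ih =>
        intro h
        have hj : j < r := Nat.lt_of_succ_lt h
        have h2 := hmono ⟨j, hj⟩ ⟨j + 1, h⟩ (by simp [Fin.lt_def])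
        have := ih hj
        omega
  intro i
  have hl : i.val + 1 ≤ m i := by
    have := lower m hmono hlow i.val i.isLt
    simpa using this
  have hu : m i ≤ i.val + 1 := by
    set m' : Fin r → ℕ := fun i => r + 1 - m i.rev with hm'
    have hmono' : ∀ i j : Fin r, i < j → m' i < m' j := by
      intro i j hij
      have : j.rev < i.rev := by
        exact Fin.rev_lt_rev.mpr hij
      have h2 := hmono _ _ this
      have h3 := hhigh i.rev
      simp only [hm']
      omega
    have hlow' : ∀ i, 1 ≤ m' i := by
      intro i; have := hhigh i.rev; simp only [hm']; omega
    have := lower m' hmono' hlow' i.rev.val i.rev.isLt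
    simp only [hm'] at this
    rw [Fin.eta, Fin.rev_rev] at this
    have h4 : (i.rev : ℕ) = r - 1 - i.val := by simp [Fin.rev]; omega
    have := hlow i
    omega
  omega

/-- If `1 ≤ r ≤ n` and there is a prime `p` with `n/(r+1) < p ≤ n/r` and `r < p`,
then `H_n(s₁,…,s_r)` is not an integer. -/
theorem mhs_not_integer_of_prime_in_interval (n r : ℕ) (hr : 1 ≤ r) (hn : r ≤ n)
    (s : Fin r → ℕ) (hs : ∀ i, 0 < s i)
    (p : ℕ) (hp : p.Prime)
    (h1 : (n : ℚ) / (r + 1) < (p : ℚ)) (h2 : (p : ℚ) ≤ (n : ℚ) / r)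
    (hrp : r < p) :
    ¬∃ m : ℤ, mhs n r s = (m : ℚ) := by
  haveI : Fact p.Prime := ⟨hp⟩
  rintro ⟨m, hm⟩
  have hp1 : 1 < p := hp.one_lt
  have hp1Q : (1 : ℚ) < (p : ℚ) := by exact_mod_cast hp1
  have hr0 : (0 : ℚ) < (r : ℚ) := by exact_mod_cast hr
  have hrpn : r * p ≤ n := by
    rw [le_div_iff₀ hr0] at h2
    have : ((r * p : ℕ) : ℚ) ≤ (n : ℚ) := by push_cast; linarith
    exact_mod_cast this
  have hnrp : n < (r + 1) * p := by
    rw [div_lt_iff₀ (by positivity : (0:ℚ) < (r:ℚ) + 1)] at h1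
    have : ((n : ℕ) : ℚ) < (((r + 1) * p : ℕ) : ℚ) := by push_cast; linarith
    exact_mod_cast this
  have hp2 : n < p ^ 2 := by
    calc n < (r + 1) * p := hnrp
    _ ≤ p * p := Nat.mul_le_mul_right _ hrp
    _ = p ^ 2 := (sq p).symm
  set T := Finset.univ.filter (fun k : Fin r → Fin n => ∀ i j : Fin r, i < j → k i < k j) with hT
  set F : (Fin r → Fin n) → ℚ := fun k => ∏ i, (1 : ℚ) / ((k i : ℕ) + 1 : ℚ) ^ s i with hF
  set S := ∑ i, s i with hSdef
  have hrS : r ≤ S := by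
    calc r = ∑ _i : Fin r, 1 := by simp
    _ ≤ S := Finset.sum_le_sum fun i _ => hs i
  -- norm of each term
  have hnorm : ∀ k : Fin r → Fin n,
      padicNorm p (F k) =
        (p : ℚ) ^ (∑ i ∈ Finset.univ.filter (fun i => p ∣ ((k i : ℕ) + 1)), s i) := by
    intro k
    rw [hF]
    simp only
    rw [padicNorm_prod']
    have : ∀ i : Fin r, padicNorm p ((1 : ℚ) / ((k i : ℕ) + 1 : ℚ) ^ s i) =
        if p ∣ ((k i : ℕ) + 1) then (p : ℚ) ^ s i else 1 := by
      intro i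
      have h1' : (0 : ℕ) < (k i : ℕ) + 1 := Nat.succ_pos _
      have h2' : ¬ p ^ 2 ∣ ((k i : ℕ) + 1) := by
        intro hdvd
        have := Nat.le_of_dvd h1' hdvd
        have := (k i).isLt
        omega
      have := padicNorm_factor p ((k i : ℕ) + 1) (s i) h1' h2'
      rw [← this]
      norm_num
    rw [Finset.prod_congr rfl (fun i _ => this i), ← Finset.prod_filter,
      Finset.prod_pow_eq_pow_sum]
  -- the special tuple
  have hk0lt : ∀ i : Fin r, (i.val + 1) * p - 1 < n := by
    intro i
    have hA : (i.val + 1) * p ≤ r * p := Nat.mul_le_mul_right _ (by omega)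
    have hB := i.isLt
    have hppos := hp.pos
    omega
  set k0 : Fin r → Fin n := fun i => ⟨(i.val + 1) * p - 1, hk0lt i⟩ with hk0
  have ha0 : ∀ i : Fin r, ((k0 i : ℕ) + 1) = (i.val + 1) * p := by
    intro i
    have hppos := hp.pos
    have hD : 0 < (i.val + 1) * p := Nat.mul_pos (Nat.succ_pos _) hppos
    simp only [hk0, Fin.val_mk]
    omega
  have hk0mem : k0 ∈ T := by
    rw [hT, Finset.mem_filter]
    refine ⟨Finset.mem_univ _, fun i j hij => ?_⟩
    have hppos := hp.pos
    simp only [hk0, Fin.lt_def, Fin.val_mk]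
    have hD : 0 < (i.val + 1) * p := Nat.mul_pos (Nat.succ_pos _) hppos
    have hC : (i.val + 1) * p < (j.val + 1) * p :=
      (Nat.mul_lt_mul_right hppos).mpr (Nat.add_lt_add_right (Fin.lt_def.mp hij) 1)
    omega
  have hck0 : (∑ i ∈ Finset.univ.filter (fun i => p ∣ ((k0 i : ℕ) + 1)), s i) = S := by
    rw [Finset.filter_true_of_mem, hSdef]
    intro i _
    rw [ha0 i]
    exact dvd_mul_left p (i.val + 1)
  -- uniqueness
  have huniq : ∀ k, k ∈ T → (∀ i : Fin r, p ∣ ((k i : ℕ) + 1)) → k = k0 := by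
    intro k hkT hdvd
    have hkmono := (Finset.mem_filter.mp hkT).2
    set mm : Fin r → ℕ := fun i => ((k i : ℕ) + 1) / p with hmm
    have hmmp : ∀ i, mm i * p = (k i : ℕ) + 1 := fun i =>
      Nat.div_mul_cancel (hdvd i)
    have hmono' : ∀ i j : Fin r, i < j → mm i < mm j := by
      intro i j hij
      have := hkmono i j hij
      have h5 : (k i : ℕ) < (k j : ℕ) := Fin.lt_def.mp this
      have h6 := hmmp i
      have h7 := hmmp j
      have hppos := hp.pos
      by_contra hle
      push_neg at hle
      have : mm j * p ≤ mm i * p := Nat.mul_le_mul_right _ hle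
      omega
    have hlow' : ∀ i, 1 ≤ mm i := by
      intro i
      have := hmmp i
      have hppos := hp.pos
      by_contra h
      push_neg at h
      interval_cases (mm i) <;> omega
    have hhigh' : ∀ i, mm i ≤ r := by
      intro i
      have h6 := hmmp i
      have h7 := (k i).isLt
      by_contra h
      push_neg at h
      have : (r + 1) * p ≤ mm i * p := Nat.mul_le_mul_right _ (by omega)
      omega
    have heq := strictmono_eq r mm hmono' hlow' hhigh'
    funext i
    have h8 := hmmp i
    rw [heq i] at h8
    have hppos := hp.pos
    apply Fin.ext
    simp only [hk0, Fin.val_mk]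
    omega
  -- bound on other terms
  have hother : ∀ k ∈ T.erase k0, padicNorm p (F k) ≤ (p : ℚ) ^ (S - 1) := by
    intro k hk
    obtain ⟨hne, hkT⟩ := Finset.mem_erase.mp hk
    have : ∃ i0 : Fin r, ¬ p ∣ ((k i0 : ℕ) + 1) := by
      by_contra h
      push_neg at h
      exact hne (huniq k hkT h)
    obtain ⟨i0, hi0⟩ := this
    rw [hnorm k]
    apply pow_le_pow_right₀ (le_of_lt hp1Q)
    have hsub : Finset.univ.filter (fun i => p ∣ ((k i : ℕ) + 1)) ⊆ Finset.univ.erase i0 := by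
      intro i hi
      rw [Finset.mem_filter] at hi
      rw [Finset.mem_erase]
      exact ⟨fun h => hi0 (h ▸ hi.2), Finset.mem_univ _⟩
    have h9 : (∑ i ∈ Finset.univ.filter (fun i => p ∣ ((k i : ℕ) + 1)), s i) ≤
        ∑ i ∈ Finset.univ.erase i0, s i :=
      Finset.sum_le_sum_of_subset hsub
    have h10 : s i0 + ∑ i ∈ Finset.univ.erase i0, s i = S :=
      Finset.add_sum_erase _ s (Finset.mem_univ i0)
    have := hs i0
    omega
  -- split the sum
  have hsplit : mhs n r s = F k0 + ∑ k ∈ T.erase k0, F k := by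
    rw [mhs, ← hT]
    exact (Finset.add_sum_erase T F hk0mem).symm
  have hnormk0 : padicNorm p (F k0) = (p : ℚ) ^ S := by rw [hnorm k0, hck0]
  have hrest : padicNorm p (∑ k ∈ T.erase k0, F k) ≤ (p : ℚ) ^ (S - 1) :=
    padicNorm.sum_le' hother (by positivity)
  have hlt : (p : ℚ) ^ (S - 1) < (p : ℚ) ^ S := by
    apply pow_lt_pow_right₀ hp1Q
    omega
  have hfinal : padicNorm p (mhs n r s) = (p : ℚ) ^ S := by
    have hltS : padicNorm p (∑ k ∈ T.erase k0, F k) < (p : ℚ) ^ S :=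
      lt_of_le_of_lt hrest hlt
    rw [hsplit, padicNorm.add_eq_max_of_ne (by rw [hnormk0]; exact hltS.ne'), hnormk0]
    exact max_eq_left hltS.le
  have hle1 : padicNorm p (mhs n r s) ≤ 1 := hm ▸ padicNorm.of_int m
  rw [hfinal] at hle1
  have : (1 : ℚ) < (p : ℚ) ^ S := one_lt_pow₀ hp1Q (by omega)
  linarith
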